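/- Let Σ be a symmetric positive semidefinite p×p real matrix with rank(Σ) ≥ d, and let y₀ be such that Σ m_{y₀} ≠ 0. Choose orthonormal eigenvectors q_1 = q*, q_2, …, q_d of Σ with positive eigenvalues λ_1, …, λ_d such that q*ᵀ m_{y₀} ≠ 0, and for ε > 0 let A be the p×d matrix with columns ε q_1, …, ε q_d. Then Aᵀ Σ² A = ε² diag(λ_1², …, λ_d²), which is invertible, and with C_{y₀} = (AᵀΣ²A)^{-1} AᵀΣ m_{y₀} one has m_{y₀}ᵀ Σ A C_{y₀} = Σ_{i=1}^d (q_iᵀ m_{y₀})² ≥ (q*ᵀ m_{y₀})² > 0. -/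

import Mathlib

open Matrix

/-- Construction of the perturbation matrix in the proof of non-existence of the
ridge SIR estimator: with orthonormal eigenvectors `q_1 = q*, …, q_d` of `Σ`
associated to positive eigenvalues `λ_1, …, λ_d`, `q*ᵀ m_{y₀} ≠ 0`, and `A` the
matrix with columns `ε q_1, …, ε q_d`, one has `Aᵀ Σ² A = ε² diag(λ_1², …, λ_d²)`
(which is invertible), and with `C_{y₀} = (Aᵀ Σ² A)⁻¹ Aᵀ Σ m_{y₀}`,
`m_{y₀}ᵀ Σ A C_{y₀} = Σ_i (q_iᵀ m_{y₀})² ≥ (q*ᵀ m_{y₀})² > 0`. -/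
theorem perturbation_construction {p d : ℕ} (hd : 0 < d)
    (S : Matrix (Fin p) (Fin p) ℝ) (hS : S.PosSemidef) (hrank : d ≤ S.rank)
    (m : Fin p → ℝ) (hm : S.mulVec m ≠ 0)
    (q : Fin d → Fin p → ℝ) (l : Fin d → ℝ)
    (hl : ∀ i, 0 < l i)
    (heig : ∀ i, S.mulVec (q i) = l i • q i)
    (horth : ∀ i j, q i ⬝ᵥ q j = if i = j then 1 else 0)
    (hqm : q ⟨0, hd⟩ ⬝ᵥ m ≠ 0)
    (ε : ℝ) (hε : 0 < ε) :
    let A : Matrix (Fin p) (Fin d) ℝ := Matrix.of fun i j => ε * q j i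
    (Aᵀ * (S * S) * A = Matrix.diagonal (fun j => ε ^ 2 * (l j) ^ 2))
      ∧ IsUnit (Aᵀ * (S * S) * A).det
      ∧ (let C := (Aᵀ * (S * S) * A)⁻¹.mulVec ((Aᵀ * S).mulVec m)
         m ⬝ᵥ S.mulVec (A.mulVec C) = ∑ i, (q i ⬝ᵥ m) ^ 2
           ∧ (q ⟨0, hd⟩ ⬝ᵥ m) ^ 2 ≤ ∑ i, (q i ⬝ᵥ m) ^ 2
           ∧ 0 < ∑ i, (q i ⬝ᵥ m) ^ 2) := by
  intro A
  have hε' : ε ≠ 0 := ne_of_gt hε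
  have hl' : ∀ i, l i ≠ 0 := fun i => ne_of_gt (hl i)
  -- symmetry of S
  have hsymm : Sᵀ = S := by
    have := hS.1.eq
    simpa [Matrix.conjTranspose_eq_transpose_of_trivial] using this
  have hsym : ∀ v w : Fin p → ℝ, v ⬝ᵥ S.mulVec w = S.mulVec v ⬝ᵥ w := by
    intro v w
    rw [Matrix.dotProduct_mulVec, ← Matrix.mulVec_transpose, hsymm]
  -- S² acts on eigenvectors
  have hT : ∀ j, (S * S).mulVec (q j) = (l j ^ 2) • q j := by
    intro j
    rw [← Matrix.mulVec_mulVec, heig, Matrix.mulVec_smul, heig, smul_smul, sq]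
  -- entry formula
  have hentry : ∀ (T : Matrix (Fin p) (Fin p) ℝ) (i j : Fin d),
      (Aᵀ * T * A) i j = ε ^ 2 * (q i ⬝ᵥ T.mulVec (q j)) := by
    intro T i j
    simp only [Matrix.mul_apply, Matrix.transpose_apply, Matrix.of_apply, A,
      Matrix.mulVec, dotProduct, Finset.sum_mul, Finset.mul_sum]
    rw [Finset.sum_comm]
    refine Finset.sum_congr rfl fun n _ => Finset.sum_congr rfl fun k _ => by ring
  have hD : Aᵀ * (S * S) * A = Matrix.diagonal (fun j => ε ^ 2 * (l j) ^ 2) := by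
    ext i j
    rw [hentry, hT j, dotProduct_smul, smul_eq_mul, horth]
    by_cases hij : i = j
    · simp [hij, Matrix.diagonal]
    · simp [hij, Matrix.diagonal]
  have hdet : IsUnit (Aᵀ * (S * S) * A).det := by
    rw [hD, Matrix.det_diagonal, isUnit_iff_ne_zero]
    exact Finset.prod_ne_zero_iff.2 fun i _ =>
      mul_ne_zero (pow_ne_zero 2 hε') (pow_ne_zero 2 (hl' i))
  refine ⟨hD, hdet, ?_⟩
  intro C
  -- inverse of the diagonal
  have hDinv : (Aᵀ * (S * S) * A)⁻¹ = Matrix.diagonal (fun j => (ε ^ 2 * (l j) ^ 2)⁻¹) := by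
    rw [hD]
    apply Matrix.inv_eq_right_inv
    rw [Matrix.diagonal_mul_diagonal]
    have : (fun i => (ε ^ 2 * (l i) ^ 2) * (ε ^ 2 * (l i) ^ 2)⁻¹) = fun _ => (1 : ℝ) :=
      funext fun i => mul_inv_cancel₀ (mul_ne_zero (pow_ne_zero 2 hε') (pow_ne_zero 2 (hl' i)))
    rw [this, Matrix.diagonal_one]
  -- Aᵀ S m
  have hAtS : (Aᵀ * S).mulVec m = fun j => ε * (l j * (q j ⬝ᵥ m)) := by
    funext j
    have : (Aᵀ * S).mulVec m j = ε * (q j ⬝ᵥ S.mulVec m) := by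
      simp only [Matrix.mul_apply, Matrix.transpose_apply, Matrix.of_apply, A,
        Matrix.mulVec, dotProduct, Finset.sum_mul, Finset.mul_sum]
      rw [Finset.sum_comm]
      refine Finset.sum_congr rfl fun n _ => Finset.sum_congr rfl fun k _ => by ring
    rw [this, hsym, heig, smul_dotProduct, smul_eq_mul]
  -- explicit value of C
  have hC : C = fun j => (q j ⬝ᵥ m) / (ε * l j) := by
    funext j
    show ((Aᵀ * (S * S) * A)⁻¹.mulVec ((Aᵀ * S).mulVec m)) j = _
    rw [hDinv, hAtS]
    simp only [Matrix.mulVec, dotProduct, Matrix.diagonal, Matrix.of_apply, ite_mul, zero_mul,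
      Finset.sum_ite_eq, Finset.mem_univ, if_true]
    have hej := hε'
    have hlj := hl' j
    field_simp
  -- the main scalar identity
  have hmain : m ⬝ᵥ S.mulVec (A.mulVec C) = ∑ i, (q i ⬝ᵥ m) ^ 2 := by
    have h1 : m ⬝ᵥ S.mulVec (A.mulVec C) = ∑ j, ε * C j * (q j ⬝ᵥ S.mulVec m) := by
      rw [hsym]
      simp only [Matrix.mulVec, dotProduct, Matrix.of_apply, A, Finset.mul_sum]
      rw [Finset.sum_comm]
      refine Finset.sum_congr rfl fun j _ => ?_
      refine Finset.sum_congr rfl fun i _ => ?_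
      rw [Finset.sum_mul]
      refine Finset.sum_congr rfl fun k _ => by ring
    rw [h1]
    refine Finset.sum_congr rfl fun j _ => ?_
    rw [hC, hsym, heig, smul_dotProduct, smul_eq_mul]
    have hlj := hl' j
    field_simp
  have hle : (q ⟨0, hd⟩ ⬝ᵥ m) ^ 2 ≤ ∑ i, (q i ⬝ᵥ m) ^ 2 :=
    Finset.single_le_sum (f := fun i => (q i ⬝ᵥ m) ^ 2)
      (fun i _ => sq_nonneg _) (Finset.mem_univ _)
  have hpos : 0 < ∑ i, (q i ⬝ᵥ m) ^ 2 :=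
    lt_of_lt_of_le (lt_of_le_of_ne (sq_nonneg _) (Ne.symm (pow_ne_zero 2 hqm))) hle
  exact ⟨hmain, hle, hpos⟩
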